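/- Let 1 < q < 2, let X₁,...,X_n be i.i.d. with density γ_q^(-1)|x|^((2-q)/(q-1))e^(-|x|^(q/(q-1))) where γ_q = 2(q-1)Γ(1+1/q), and let ε₁,...,ε_n be i.i.d. Rademacher (uniform on {-1,1}). Then for every unit vector a ∈ ℝⁿ, |E|∑ aⱼXⱼ| - E|∑ aⱼεⱼ|| ≤ 3(1 - 1/q). -/

import Mathlib

open Real MeasureTheory ProbabilityTheory Set
open scoped ENNReal NNReal

/- ### Analytic preliminaries -/

lemma aux_sinh_le {θ : ℝ} (hθ0 : 0 ≤ θ) (hθ1 : θ ≤ 1) {v : ℝ} (hv : 0 ≤ v) :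
    Real.sinh (θ * v) ≤ θ * Real.sinh v := by
  have hd : ∀ w : ℝ, HasDerivAt (fun w => θ * Real.sinh w - Real.sinh (θ * w))
      (θ * Real.cosh w - Real.cosh (θ * w) * θ) w := by
    intro w
    exact ((Real.hasDerivAt_sinh w).const_mul θ).sub
      (((Real.hasDerivAt_sinh (θ * w)).comp w ((hasDerivAt_id w).const_mul θ)).congr_deriv
        (by ring))
  have hmono : MonotoneOn (fun w => θ * Real.sinh w - Real.sinh (θ * w)) (Ici (0:ℝ)) := by
    apply monotoneOn_of_deriv_nonneg (convex_Ici 0)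
    · exact (Continuous.sub (continuous_const.mul continuous_sinh)
        (continuous_sinh.comp (continuous_const.mul continuous_id))).continuousOn
    · intro w hw
      exact ((hd w).differentiableAt).differentiableWithinAt
    · intro w hw
      rw [(hd w).deriv]
      have hw0 : 0 ≤ w := le_of_lt (by simpa using hw)
      have : Real.cosh (θ * w) ≤ Real.cosh w := by
        rw [Real.cosh_le_cosh]
        rw [abs_of_nonneg (mul_nonneg hθ0 hw0), abs_of_nonneg hw0]
        nlinarith
      nlinarith
  have h0 : (fun w => θ * Real.sinh w - Real.sinh (θ * w)) 0 = 0 := by simp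
  have := hmono (self_mem_Ici) hv hv
  rw [h0] at this
  simpa using this

lemma aux_exp_diff (u : ℝ) :
    Real.exp u + Real.exp (-u) - 2 = 4 * Real.sinh (u / 2) ^ 2 := by
  rw [Real.sinh_eq]
  have h1 : Real.exp (u/2) * Real.exp (u/2) = Real.exp u := by
    rw [← Real.exp_add]; ring_nf
  have h2 : Real.exp (-(u/2)) * Real.exp (-(u/2)) = Real.exp (-u) := by
    rw [← Real.exp_add]; ring_nf
  have h3 : Real.exp (u/2) * Real.exp (-(u/2)) = 1 := by
    rw [← Real.exp_add]; simp
  have : (rexp (u/2) - rexp (-(u/2)))^2 = rexp u + rexp (-u) - 2 := by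
    rw [sub_sq]; nlinarith [h1,h2,h3]
  rw [div_pow]; linarith

lemma aux_abs_sinh_le {s : ℝ} (hs0 : 0 ≤ s) (hs1 : s ≤ 1 / 2) (y : ℝ) :
    |Real.sinh (s * y / 2)| ≤ 2 * s * |Real.sinh (y / 4)| := by
  have h1 : |Real.sinh (s * y / 2)| = Real.sinh (2 * s * (|y| / 4)) := by
    rw [Real.abs_sinh]
    congr 1
    rw [abs_div, abs_mul, abs_of_nonneg hs0]
    norm_num
    ring
  have h2 : |Real.sinh (y / 4)| = Real.sinh (|y| / 4) := by
    rw [Real.abs_sinh, abs_div]; norm_num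
  rw [h1, h2]
  exact aux_sinh_le (by linarith) (by linarith) (by positivity)

lemma aux_pointwise {s : ℝ} (hs0 : 0 ≤ s) (hs1 : s ≤ 1 / 2) {x : ℝ} (hx : 0 < x) :
    x ^ s + x ^ (-s) - 2 ≤ 4 * s ^ 2 * (x ^ (1/2 : ℝ) + x ^ (-(1/2) : ℝ) - 2) := by
  rw [Real.rpow_def_of_pos hx, Real.rpow_def_of_pos hx, Real.rpow_def_of_pos hx,
    Real.rpow_def_of_pos hx]
  set y := Real.log x with hy
  have e1 : Real.exp (y * s) + Real.exp (y * -s) - 2 = 4 * Real.sinh (s * y / 2) ^ 2 := by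
    have := aux_exp_diff (s * y)
    rw [show y * s = s * y by ring, show y * -s = -(s*y) by ring]
    exact this
  have e2 : Real.exp (y * (1/2)) + Real.exp (y * -(1/2)) - 2 = 4 * Real.sinh (y / 4) ^ 2 := by
    have := aux_exp_diff (y / 2)
    rw [show y * (1/2) = y/2 by ring, show y * -(1/2:ℝ) = -(y/2) by ring,
      show y / 2 / 2 = y / 4 by ring] at *
    exact this
  rw [e1, e2]
  have := aux_abs_sinh_le hs0 hs1 y
  have h := sq_le_sq' (by linarith [abs_nonneg (Real.sinh (s*y/2)), neg_abs_le (Real.sinh (s*y/2))]) (le_trans (le_abs_self _) this)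
  have habs : Real.sinh (s*y/2)^2 ≤ (2*s*|Real.sinh (y/4)|)^2 := by
    nlinarith [abs_nonneg (Real.sinh (s*y/2)), sq_abs (Real.sinh (s*y/2)), this, neg_abs_le (Real.sinh (s*y/2)), le_abs_self (Real.sinh (s*y/2))]
  calc 4 * Real.sinh (s * y / 2) ^ 2 ≤ 4 * (2*s*|Real.sinh (y/4)|)^2 := by linarith
    _ = 4 * s^2 * (4 * Real.sinh (y/4)^2) := by
        rw [mul_pow, mul_pow, sq_abs]; ring

lemma aux_gamma_int {t : ℝ} (ht : -1 < t) :
    IntegrableOn (fun x : ℝ => Real.exp (-x) * x ^ t) (Ioi 0) ∧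
    ∫ x in Ioi (0:ℝ), Real.exp (-x) * x ^ t = Real.Gamma (t + 1) := by
  constructor
  · have := Real.GammaIntegral_convergent (s := t + 1) (by linarith)
    simpa using this
  · rw [Real.Gamma_eq_integral (by linarith : (0:ℝ) < t + 1)]
    simp

lemma aux_gamma_sum {s : ℝ} (hs0 : 0 ≤ s) (hs1 : s ≤ 1/2) :
    Real.Gamma (1 + s) + Real.Gamma (1 - s) - 2 ≤ 9 * s ^ 2 := by
  obtain ⟨hi1, he1⟩ := aux_gamma_int (t := s) (by linarith)
  obtain ⟨hi2, he2⟩ := aux_gamma_int (t := -s) (by linarith)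
  obtain ⟨hi0, he0⟩ := aux_gamma_int (t := 0) (by norm_num)
  obtain ⟨hi3, he3⟩ := aux_gamma_int (t := (1/2 : ℝ)) (by norm_num)
  obtain ⟨hi4, he4⟩ := aux_gamma_int (t := (-(1/2) : ℝ)) (by norm_num)
  have hi12 : IntegrableOn (fun x : ℝ => Real.exp (-x) * x ^ s + Real.exp (-x) * x ^ (-s)) (Ioi 0) := hi1.add hi2
  have hi0' : IntegrableOn (fun x : ℝ => 2 * (Real.exp (-x) * x ^ (0:ℝ))) (Ioi 0) := hi0.const_mul 2
  have hi34 : IntegrableOn (fun x : ℝ => Real.exp (-x) * x ^ (1/2:ℝ) + Real.exp (-x) * x ^ (-(1/2):ℝ)) (Ioi 0) := hi3.add hi4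
  have key : Real.Gamma (1 + s) + Real.Gamma (1 - s) - 2
      = ∫ x in Ioi (0:ℝ), (Real.exp (-x) * x ^ s + Real.exp (-x) * x ^ (-s)
          - 2 * (Real.exp (-x) * x ^ (0:ℝ))) := by
    rw [integral_sub hi12 hi0', integral_add hi1 hi2,
      integral_const_mul, he1, he2, he0]
    rw [show (1:ℝ) - s = -s + 1 by ring, show (0:ℝ) + 1 = 1 by ring, Real.Gamma_one]
    ring_nf
  have key2 : (∫ x in Ioi (0:ℝ), (Real.exp (-x) * x ^ s + Real.exp (-x) * x ^ (-s)
          - 2 * (Real.exp (-x) * x ^ (0:ℝ))))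
      ≤ ∫ x in Ioi (0:ℝ), 4 * s^2 * (Real.exp (-x) * x ^ (1/2:ℝ) + Real.exp (-x) * x ^ (-(1/2):ℝ)
          - 2 * (Real.exp (-x) * x ^ (0:ℝ))) := by
    apply setIntegral_mono_on
    · exact hi12.sub hi0'
    · exact ((hi34.sub hi0').const_mul _)
    · exact measurableSet_Ioi
    · intro x hx
      have hx : (0:ℝ) < x := hx
      have := aux_pointwise hs0 hs1 hx
      have hexp : 0 ≤ Real.exp (-x) := (Real.exp_pos _).le
      rw [Real.rpow_zero]
      nlinarith [this, hexp]
  have key3 : (∫ x in Ioi (0:ℝ), 4 * s^2 * (Real.exp (-x) * x ^ (1/2:ℝ)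
        + Real.exp (-x) * x ^ (-(1/2):ℝ) - 2 * (Real.exp (-x) * x ^ (0:ℝ))))
      = 4 * s^2 * (Real.Gamma (3/2) + Real.Gamma (1/2) - 2) := by
    rw [integral_const_mul, integral_sub hi34 hi0', integral_add hi3 hi4,
      integral_const_mul, he3, he4, he0]
    norm_num
  have hpi : Real.Gamma (3/2) + Real.Gamma (1/2) - 2 ≤ 9/4 := by
    have h12 : Real.Gamma (1/2) = Real.sqrt π := Real.Gamma_one_half_eq
    have h32 : Real.Gamma (3/2) = (1/2) * Real.sqrt π := by
      rw [show (3/2 : ℝ) = 1/2 + 1 by norm_num, Real.Gamma_add_one (by norm_num), h12]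
    have : Real.sqrt π ≤ 2 := by
      rw [show (2:ℝ) = Real.sqrt 4 by rw [show (4:ℝ) = 2^2 by norm_num, Real.sqrt_sq]; norm_num]
      exact Real.sqrt_le_sqrt (by linarith [Real.pi_le_four])
    nlinarith [this]
  nlinarith [key, key2, key3, hpi, sq_nonneg s]

lemma aux_gamma_ge_one {t : ℝ} (h1 : 1/2 ≤ t) (h2 : t ≤ 1) : 1 ≤ Real.Gamma t := by
  have ht0 : 0 < t := by linarith
  have hx : t + 1 ∈ Ioi (0:ℝ) := by simp; linarith
  have h3 : (3:ℝ) ∈ Ioi (0:ℝ) := by norm_num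
  set lam : ℝ := 1 / (3 - (t+1)) with hlam
  have hden : 0 < 3 - (t+1) := by linarith
  have hlam0 : 0 ≤ lam := by positivity
  have hlam1 : 0 ≤ 1 - lam := by
    rw [hlam, sub_nonneg, div_le_one hden]; linarith
  have hsum : lam + (1 - lam) = 1 := by ring
  have hcomb : lam • (t+1) + (1 - lam) • (3:ℝ) = 2 := by
    simp only [smul_eq_mul, hlam]
    field_simp
    ring
  have := Real.convexOn_Gamma.2 hx h3 hlam0 hlam1 hsum
  rw [hcomb] at this
  rw [Real.Gamma_two] at this
  have h3' : Real.Gamma 3 = 2 := by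
    rw [show (3:ℝ) = 2 + 1 by norm_num, Real.Gamma_add_one (by norm_num), Real.Gamma_two]; norm_num
  rw [h3'] at this
  simp only [smul_eq_mul] at this
  -- this : 1 ≤ lam * Γ(t+1) + (1-lam) * 2
  have hG : t ≤ Real.Gamma (t + 1) := by
    have hlampos : 0 < lam := by positivity
    have h2lam : (1:ℝ) - 2*(1-lam) = lam * t := by
      rw [hlam]; field_simp; ring
    nlinarith [this]
  have := Real.Gamma_add_one (ne_of_gt ht0)
  rw [this] at hG
  nlinarith [hG, ht0]

lemma aux_gamma_key {q : ℝ} (hq1 : 1 < q) (hq2 : q < 2) :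
    Real.Gamma (2 - 1/q) / Real.Gamma (1/q) - 2 / Real.Gamma (1/q) + 1
      ≤ 9 * (1 - 1/q)^2 := by
  set s := 1 - 1/q with hs
  have hq0 : 0 < q := by linarith
  have ht1 : 1/2 < 1/q := by rw [div_lt_div_iff₀ (by norm_num) hq0]; linarith
  have ht2 : 1/q < 1 := by rw [div_lt_one hq0]; linarith
  have hs0 : 0 ≤ s := by rw [hs]; linarith
  have hs1 : s ≤ 1/2 := by rw [hs]; linarith
  have hsum := aux_gamma_sum hs0 hs1
  have e1 : 1 + s = 2 - 1/q := by rw [hs]; ring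
  have e2 : 1 - s = 1/q := by rw [hs]; ring
  rw [e1, e2] at hsum
  have hG1 : 1 ≤ Real.Gamma (1/q) := aux_gamma_ge_one (le_of_lt ht1) (le_of_lt ht2)
  have hGpos : 0 < Real.Gamma (1/q) := by linarith
  have : (Real.Gamma (2 - 1/q) - 2 + Real.Gamma (1/q)) / Real.Gamma (1/q) ≤ 9 * s^2 := by
    rw [div_le_iff₀ hGpos]
    nlinarith [hsum, sq_nonneg s]
  calc Real.Gamma (2 - 1/q) / Real.Gamma (1/q) - 2 / Real.Gamma (1/q) + 1
      = (Real.Gamma (2 - 1/q) - 2 + Real.Gamma (1/q)) / Real.Gamma (1/q) := by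
        field_simp
    _ ≤ 9 * s^2 := this
    _ = 9 * (1 - 1/q)^2 := by rw [hs]

/- ### The density and its moments -/

noncomputable def dq (q : ℝ) (x : ℝ) : ℝ :=
  (2 * (q - 1) * Real.Gamma (1 + 1 / q))⁻¹ * |x| ^ ((2 - q) / (q - 1)) *
    Real.exp (-(|x| ^ (q / (q - 1))))

noncomputable def nuq (q : ℝ) : Measure ℝ :=
  volume.withDensity fun x => ENNReal.ofReal (dq q x)

noncomputable def sgn' (x : ℝ) : ℝ := if x < 0 then -1 else 1

noncomputable def Fq (q p : ℝ) (x : ℝ) : ℝ :=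
  x ^ p * ((2 * (q - 1) * Real.Gamma (1 + 1 / q))⁻¹ * x ^ ((2 - q) / (q - 1)) *
    Real.exp (-(x ^ (q / (q - 1)))))

section density
variable {q : ℝ} (hq1 : 1 < q) (hq2 : q < 2)

lemma measurable_dq : Measurable (dq q) := by unfold dq; fun_prop

lemma dq_even (x : ℝ) : dq q (-x) = dq q x := by unfold dq; rw [abs_neg]

lemma abs_dq (x : ℝ) : dq q |x| = dq q x := by unfold dq; rw [abs_abs]

lemma moment_eq_Fq_abs (p : ℝ) : (fun x : ℝ => |x| ^ p * dq q x) = fun x => Fq q p |x| := by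
  funext x
  unfold Fq dq
  rfl

include hq1 hq2

lemma cq_pos : 0 < 2 * (q - 1) * Real.Gamma (1 + 1 / q) := by
  have : 0 < 1 + 1/q := by positivity
  have := Real.Gamma_pos_of_pos this
  nlinarith

lemma dq_nonneg (x : ℝ) : 0 ≤ dq q x := by
  unfold dq
  have h1 := cq_pos hq1 hq2
  have h2 : 0 < (2 * (q - 1) * Real.Gamma (1 + 1 / q))⁻¹ := by positivity
  positivity

lemma integrableOn_Fq (p : ℝ) (hp : 0 ≤ p) : IntegrableOn (Fq q p) (Ioi 0) := by
  have hq0 : 0 < q - 1 := by linarith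
  have hβ : 1 ≤ q / (q - 1) := by rw [le_div_iff₀ hq0]; linarith
  have hα : -1 < p + (2 - q) / (q - 1) := by
    have : 0 ≤ (2 - q) / (q - 1) := div_nonneg (by linarith) (by linarith)
    linarith
  have base := integrableOn_rpow_mul_exp_neg_rpow hα (lt_of_lt_of_le one_pos hβ)
  have h2 : IntegrableOn (fun x : ℝ =>
      (2 * (q - 1) * Real.Gamma (1 + 1 / q))⁻¹ * (x ^ (p + (2 - q) / (q - 1)) *
        Real.exp (-x ^ (q / (q - 1))))) (Ioi 0) := base.const_mul _
  apply h2.congr_fun ?_ measurableSet_Ioi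
  intro x hx
  have hx : (0:ℝ) < x := hx
  dsimp only
  unfold Fq
  rw [Real.rpow_add hx]
  ring

lemma integrable_Fq_abs (p : ℝ) (hp : 0 ≤ p) : Integrable (fun x : ℝ => Fq q p |x|) := by
  have habs : IntegrableOn (fun x => Fq q p |x|) (Ioi 0) := by
    apply (integrableOn_Fq hq1 hq2 p hp).congr_fun ?_ measurableSet_Ioi
    intro x hx
    dsimp only
    rw [abs_of_pos (show (0:ℝ) < x from hx)]
  have hIic : IntegrableOn (fun x => Fq q p |x|) (Iic 0) := by
    rw [← Measure.map_neg_eq_self (volume : Measure ℝ)]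
    have m : MeasurableEmbedding fun x : ℝ => -x := (Homeomorph.neg ℝ).measurableEmbedding
    rw [m.integrableOn_map_iff]
    simp_rw [Function.comp_def, abs_neg, neg_preimage, neg_Iic, neg_zero]
    exact Iff.mpr integrableOn_Ici_iff_integrableOn_Ioi habs
  have := hIic.union habs
  rwa [Iic_union_Ioi, integrableOn_univ] at this

lemma integrable_dq_moment (p : ℝ) (hp : 0 ≤ p) :
    Integrable (fun x : ℝ => |x| ^ p * dq q x) := by
  rw [moment_eq_Fq_abs]
  exact integrable_Fq_abs hq1 hq2 p hp

lemma integral_dq_moment (p : ℝ) (hp : 0 ≤ p) :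
    ∫ x : ℝ, |x| ^ p * dq q x
      = Real.Gamma ((p * (q - 1) + 1) / q) / Real.Gamma (1 / q) := by
  have hq0 : 0 < q - 1 := by linarith
  have hqpos : 0 < q := by linarith
  have hβpos : 0 < q / (q - 1) := by positivity
  have hα : -1 < p + (2 - q) / (q - 1) := by
    have : 0 ≤ (2 - q) / (q - 1) := div_nonneg (by linarith) (by linarith)
    linarith
  calc ∫ x : ℝ, |x| ^ p * dq q x = ∫ x : ℝ, Fq q p |x| := by rw [moment_eq_Fq_abs]
    _ = 2 * ∫ x in Ioi (0:ℝ), Fq q p x := integral_comp_abs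
    _ = 2 * ∫ x in Ioi (0:ℝ), (2 * (q - 1) * Real.Gamma (1 + 1 / q))⁻¹ *
          (x ^ (p + (2 - q) / (q - 1)) * Real.exp (-x ^ (q / (q - 1)))) := by
        congr 1
        apply setIntegral_congr_fun measurableSet_Ioi
        intro x hx
        have hx : (0:ℝ) < x := hx
        dsimp only
        unfold Fq
        rw [Real.rpow_add hx]
        ring
    _ = 2 * ((2 * (q - 1) * Real.Gamma (1 + 1 / q))⁻¹ *
          ((1 / (q / (q - 1))) * Real.Gamma ((p + (2 - q) / (q - 1) + 1) / (q / (q - 1))))) := by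
        rw [integral_const_mul, integral_rpow_mul_exp_neg_rpow hβpos hα]
    _ = Real.Gamma ((p * (q - 1) + 1) / q) / Real.Gamma (1 / q) := by
        have hGq : Real.Gamma (1 + 1/q) = (1/q) * Real.Gamma (1/q) := by
          rw [add_comm, Real.Gamma_add_one (by positivity)]
        have hexp : (p + (2 - q) / (q - 1) + 1) / (q / (q - 1)) = (p * (q - 1) + 1) / q := by
          field_simp
          ring
        rw [hexp, hGq]
        have hGpos : 0 < Real.Gamma (1/q) := Real.Gamma_pos_of_pos (by positivity)
        field_simp


omit hq1 hq2 in
lemma integral_odd_zero (g : ℝ → ℝ) (hodd : ∀ x, g (-x) = - g x) : ∫ x : ℝ, g x = 0 := by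
  have m : MeasurableEmbedding fun x : ℝ => -x := (Homeomorph.neg ℝ).measurableEmbedding
  have h1 : ∫ x : ℝ, g x = ∫ x : ℝ, g (-x) := by
    conv_lhs => rw [← Measure.map_neg_eq_self (volume : Measure ℝ)]
    exact m.integral_map g
  have h2 : ∫ x : ℝ, g (-x) = - ∫ x : ℝ, g x := by
    calc ∫ x : ℝ, g (-x) = ∫ x : ℝ, -(g x) := by simp_rw [hodd]
      _ = - ∫ x : ℝ, g x := integral_neg _
  linarith [h1, h2]

omit hq1 hq2 in
lemma measurable_sgn' : Measurable sgn' :=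
  Measurable.ite measurableSet_Iio measurable_const measurable_const

omit hq1 hq2 in
lemma sgn'_sq (x : ℝ) : sgn' x ^ 2 = 1 := by unfold sgn'; split_ifs <;> norm_num
omit hq1 hq2 in
lemma mul_sgn' (x : ℝ) : x * sgn' x = |x| := by
  unfold sgn'; split_ifs with h
  · rw [abs_of_neg h]; ring
  · rw [abs_of_nonneg (not_lt.mp h)]; ring
omit hq1 hq2 in
lemma D_sq_eq (x : ℝ) : (x - sgn' x) ^ 2 = x ^ 2 - 2 * |x| + 1 := by
  have h1 := sgn'_sq x
  have h2 := mul_sgn' x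
  nlinarith [h1, h2]

include hq1 hq2
lemma integrable_dq : Integrable (dq q) := by
  have := integrable_dq_moment hq1 hq2 0 le_rfl
  apply this.congr
  filter_upwards with x
  rw [Real.rpow_zero, one_mul]

lemma integral_dq : ∫ x : ℝ, dq q x = 1 := by
  have h := integral_dq_moment hq1 hq2 0 le_rfl
  have h2 : (0 * (q - 1) + 1) / q = 1 / q := by ring
  rw [h2] at h
  have hG : Real.Gamma (1/q) ≠ 0 := ne_of_gt (Real.Gamma_pos_of_pos (by positivity))
  rw [div_self hG] at h
  rw [← h]
  congr 1
  funext x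
  rw [Real.rpow_zero, one_mul]

lemma nuq_integral (g : ℝ → ℝ) : ∫ x, g x ∂(nuq q) = ∫ x : ℝ, g x * dq q x := by
  unfold nuq
  rw [show (fun x => ENNReal.ofReal (dq q x))
      = (fun x => ((dq q x).toNNReal : ℝ≥0∞)) from rfl]
  rw [integral_withDensity_eq_integral_smul (measurable_dq.real_toNNReal) g]
  congr 1
  funext x
  rw [NNReal.smul_def, Real.coe_toNNReal _ (dq_nonneg hq1 hq2 x), smul_eq_mul, mul_comm]

lemma nuq_integrable_iff (g : ℝ → ℝ) :
    Integrable g (nuq q) ↔ Integrable (fun x => g x * dq q x) volume := by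
  unfold nuq
  rw [show (fun x => ENNReal.ofReal (dq q x))
      = (fun x => ((dq q x).toNNReal : ℝ≥0∞)) from rfl]
  rw [integrable_withDensity_iff_integrable_smul (measurable_dq.real_toNNReal)]
  constructor <;> intro h <;> apply h.congr <;> filter_upwards with x <;>
    rw [NNReal.smul_def, Real.coe_toNNReal _ (dq_nonneg hq1 hq2 x), smul_eq_mul, mul_comm]

lemma nuq_prob : IsProbabilityMeasure (nuq q) := by
  constructor
  unfold nuq
  rw [withDensity_apply _ MeasurableSet.univ, Measure.restrict_univ,
    ← ofReal_integral_eq_lintegral_ofReal (integrable_dq hq1 hq2)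
      (Filter.Eventually.of_forall (dq_nonneg hq1 hq2)),
    integral_dq hq1 hq2, ENNReal.ofReal_one]

lemma integral_Ioi_dq : ∫ x in Ioi (0:ℝ), dq q x = 1/2 := by
  have h : ∫ x : ℝ, dq q |x| = 2 * ∫ x in Ioi (0:ℝ), dq q x := integral_comp_abs
  have h2 : (fun x : ℝ => dq q |x|) = dq q := by
    funext x; unfold dq; rw [abs_abs]
  rw [h2, integral_dq hq1 hq2] at h
  linarith

lemma integral_Iio_dq : ∫ x in Iio (0:ℝ), dq q x = 1/2 := by
  rw [← integral_Iic_eq_integral_Iio]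
  have := integral_comp_neg_Ioi (0:ℝ) (dq q)
  rw [neg_zero] at this
  rw [← this]
  have h2 : ∀ x, dq q (-x) = dq q x := dq_even
  simp_rw [h2]
  exact integral_Ioi_dq hq1 hq2

lemma nuq_Iio : nuq q (Iio 0) = 2⁻¹ := by
  unfold nuq
  rw [withDensity_apply _ measurableSet_Iio,
    ← ofReal_integral_eq_lintegral_ofReal ((integrable_dq hq1 hq2).integrableOn)
      (Filter.Eventually.of_forall fun x => dq_nonneg hq1 hq2 x),
    integral_Iio_dq hq1 hq2]
  rw [one_div, ENNReal.ofReal_inv_of_pos two_pos]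
  norm_num

lemma nuq_Ici : nuq q (Ici 0) = 2⁻¹ := by
  haveI := nuq_prob hq1 hq2
  have h : Ici (0:ℝ) = (Iio 0)ᶜ := by simp
  rw [h, measure_compl measurableSet_Iio (measure_ne_top _ _), measure_univ,
    nuq_Iio hq1 hq2, ← ENNReal.inv_two_add_inv_two, ENNReal.add_sub_cancel_right]
  exact ENNReal.inv_ne_top.mpr (by norm_num)

lemma map_sgn'_nuq : (nuq q).map sgn' = (2⁻¹ : ENNReal) • (Measure.dirac (1 : ℝ) + Measure.dirac (-1 : ℝ)) := by
  haveI := nuq_prob hq1 hq2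
  ext s hs
  rw [Measure.map_apply measurable_sgn' hs, Measure.smul_apply, Measure.coe_add, Pi.add_apply,
    Measure.dirac_apply' _ hs, Measure.dirac_apply' _ hs]
  by_cases h1 : (1:ℝ) ∈ s <;> by_cases h2 : (-1:ℝ) ∈ s
  · have hpre : sgn' ⁻¹' s = univ := by
      ext x; simp only [mem_preimage, mem_univ, iff_true, sgn']
      split_ifs <;> assumption
    rw [hpre, measure_univ]
    simp only [indicator_of_mem, h1, h2, Pi.one_apply]
    rw [smul_eq_mul, mul_add, mul_one, ENNReal.inv_two_add_inv_two]
  · have hpre : sgn' ⁻¹' s = Ici 0 := by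
      ext x; simp only [mem_preimage, mem_Ici, sgn']
      split_ifs with h
      · simp [h2]; linarith
      · simp [h1]; linarith
    rw [hpre, nuq_Ici hq1 hq2]
    simp [indicator_of_mem, indicator_of_notMem, h1, h2]
  · have hpre : sgn' ⁻¹' s = Iio 0 := by
      ext x; simp only [mem_preimage, mem_Iio, sgn']
      split_ifs with h
      · simp [h2]; linarith
      · simp [h1]; linarith
    rw [hpre, nuq_Iio hq1 hq2]
    simp [indicator_of_mem, indicator_of_notMem, h1, h2]
  · have hpre : sgn' ⁻¹' s = ∅ := by
      ext x; simp only [mem_preimage, mem_empty_iff_false, iff_false, sgn']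
      split_ifs <;> assumption
    rw [hpre]
    simp [indicator_of_notMem, h1, h2]

lemma integrable_abs_moment_nuq (p : ℝ) (hp : 0 ≤ p) :
    Integrable (fun x : ℝ => |x| ^ p) (nuq q) :=
  (nuq_integrable_iff hq1 hq2 _).mpr (integrable_dq_moment hq1 hq2 p hp)

lemma integrable_id_nuq : Integrable (fun x : ℝ => x) (nuq q) := by
  rw [nuq_integrable_iff hq1 hq2]
  apply (integrable_dq_moment hq1 hq2 1 zero_le_one).mono'
  · exact (measurable_id.mul (measurable_dq)).aestronglyMeasurable
  · filter_upwards with x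
    rw [norm_mul, Real.norm_eq_abs, Real.norm_eq_abs, abs_of_nonneg (dq_nonneg hq1 hq2 x),
      Real.rpow_one]

lemma integrable_sq_nuq : Integrable (fun x : ℝ => x ^ 2) (nuq q) := by
  apply (integrable_abs_moment_nuq hq1 hq2 2 (by norm_num)).congr
  filter_upwards with x
  rw [show ((2:ℝ)) = ((2:ℕ):ℝ) by norm_num, Real.rpow_natCast, sq_abs]

lemma integrable_abs_nuq : Integrable (fun x : ℝ => |x|) (nuq q) := by
  apply (integrable_abs_moment_nuq hq1 hq2 1 zero_le_one).congr
  filter_upwards with x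
  rw [Real.rpow_one]

lemma integrable_sgn'_nuq : Integrable sgn' (nuq q) := by
  haveI := nuq_prob hq1 hq2
  apply (integrable_const (1:ℝ)).mono' measurable_sgn'.aestronglyMeasurable
  filter_upwards with x
  unfold sgn'; split_ifs <;> simp

lemma integral_sq_nuq : ∫ x, x ^ 2 ∂(nuq q) = Real.Gamma (2 - 1/q) / Real.Gamma (1/q) := by
  rw [nuq_integral hq1 hq2]
  have h : (fun x : ℝ => x ^ 2 * dq q x) = fun x : ℝ => |x| ^ (2:ℝ) * dq q x := by
    funext x
    rw [show ((2:ℝ)) = ((2:ℕ):ℝ) by norm_num, Real.rpow_natCast, sq_abs]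
  rw [h, integral_dq_moment hq1 hq2 2 (by norm_num)]
  congr 2
  have hq0 : q ≠ 0 := by linarith
  field_simp
  ring

lemma integral_abs_nuq : ∫ x, |x| ∂(nuq q) = 1 / Real.Gamma (1/q) := by
  rw [nuq_integral hq1 hq2]
  have h : (fun x : ℝ => |x| * dq q x) = fun x : ℝ => |x| ^ (1:ℝ) * dq q x := by
    funext x; rw [Real.rpow_one]
  rw [h, integral_dq_moment hq1 hq2 1 zero_le_one]
  have : (1 * (q - 1) + 1) / q = 1 := by field_simp; ring
  rw [this, Real.Gamma_one]

lemma integral_id_nuq : ∫ x, x ∂(nuq q) = 0 := by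
  rw [nuq_integral hq1 hq2]
  apply integral_odd_zero
  intro x
  rw [dq_even]
  ring

lemma integral_sgn'_nuq : ∫ x, sgn' x ∂(nuq q) = 0 := by
  haveI := nuq_prob hq1 hq2
  have hsplit := integral_add_compl (measurableSet_Iio (a := (0:ℝ)))
    (integrable_sgn'_nuq hq1 hq2)
  have hIio : ∫ x in Iio (0:ℝ), sgn' x ∂(nuq q) = -((nuq q (Iio 0)).toReal) := by
    rw [setIntegral_congr_fun measurableSet_Iio (g := fun _ => (-1:ℝ))
      (fun x hx => by simp [sgn', show x < 0 from hx]), setIntegral_const]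
    simp
    rfl
  have hIci : ∫ x in (Iio (0:ℝ))ᶜ, sgn' x ∂(nuq q) = (nuq q (Ici 0)).toReal := by
    rw [show (Iio (0:ℝ))ᶜ = Ici 0 by simp]
    rw [setIntegral_congr_fun measurableSet_Ici (g := fun _ => (1:ℝ))
      (fun x hx => by simp [sgn', not_lt.mpr (show (0:ℝ) ≤ x from hx)]), setIntegral_const]
    simp
    rfl
  rw [hIio, hIci, nuq_Iio hq1 hq2, nuq_Ici hq1 hq2] at hsplit
  rw [← hsplit]
  ring

lemma integral_D_nuq : ∫ x, (x - sgn' x) ∂(nuq q) = 0 := by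
  rw [integral_sub (integrable_id_nuq hq1 hq2) (integrable_sgn'_nuq hq1 hq2),
    integral_id_nuq hq1 hq2, integral_sgn'_nuq hq1 hq2]
  ring

lemma integrable_D_sq_nuq : Integrable (fun x : ℝ => (x - sgn' x) ^ 2) (nuq q) := by
  haveI := nuq_prob hq1 hq2
  have : (fun x : ℝ => (x - sgn' x) ^ 2) = fun x => x ^ 2 - 2 * |x| + 1 := by
    funext x; exact D_sq_eq x
  rw [this]
  exact (((integrable_sq_nuq hq1 hq2).sub ((integrable_abs_nuq hq1 hq2).const_mul 2)).add
    (integrable_const 1))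

lemma integral_D_sq_nuq : ∫ x, (x - sgn' x) ^ 2 ∂(nuq q)
    = Real.Gamma (2 - 1/q) / Real.Gamma (1/q) - 2 / Real.Gamma (1/q) + 1 := by
  haveI := nuq_prob hq1 hq2
  have : (fun x : ℝ => (x - sgn' x) ^ 2) = fun x => x ^ 2 - 2 * |x| + 1 := by
    funext x; exact D_sq_eq x
  have habs2 : Integrable (fun x : ℝ => 2 * |x|) (nuq q) :=
    (integrable_abs_nuq hq1 hq2).const_mul 2
  have h1 : Integrable (fun x : ℝ => x ^ 2 - 2 * |x|) (nuq q) :=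
    (integrable_sq_nuq hq1 hq2).sub habs2
  rw [this, integral_add h1 (integrable_const 1),
    integral_sub (integrable_sq_nuq hq1 hq2) habs2,
    integral_const_mul, integral_sq_nuq hq1 hq2, integral_abs_nuq hq1 hq2, integral_const]
  simp [measure_univ]
  ring

lemma memLp_D_nuq : MemLp (fun x : ℝ => x - sgn' x) 2 (nuq q) := by
  haveI := nuq_prob hq1 hq2
  have hm : Measurable (fun x : ℝ => x - sgn' x) := measurable_id.sub measurable_sgn'
  rw [memLp_two_iff_integrable_sq hm.aestronglyMeasurable]
  exact integrable_D_sq_nuq hq1 hq2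

end density

/- ### Probability glue -/

lemma aemeasurable_tuple {Ω : Type*} [MeasurableSpace Ω] {μ : Measure Ω}
    {n : ℕ} {X : Fin n → Ω → ℝ} (hm : ∀ j, AEMeasurable (X j) μ) :
    AEMeasurable (fun ω j => X j ω) μ := by
  refine ⟨fun ω j => (hm j).mk (X j) ω, measurable_pi_lambda _ fun j => (hm j).measurable_mk, ?_⟩
  have : ∀ᵐ ω ∂μ, ∀ j, X j ω = (hm j).mk (X j) ω := ae_all_iff.mpr fun j => (hm j).ae_eq_mk
  filter_upwards [this] with ω hω
  funext j
  exact hω j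

lemma joint_law {Ω : Type*} [MeasurableSpace Ω] (μ : Measure Ω) [IsProbabilityMeasure μ]
    {n : ℕ} (X : Fin n → Ω → ℝ) (hm : ∀ j, AEMeasurable (X j) μ)
    (hindep : iIndepFun X μ)
    (ν : Fin n → Measure ℝ) [∀ j, IsProbabilityMeasure (ν j)]
    (hd : ∀ j, μ.map (X j) = ν j) :
    μ.map (fun ω j => X j ω) = Measure.pi ν := by
  symm
  apply Measure.pi_eq
  intro s hs
  rw [Measure.map_apply_of_aemeasurable (aemeasurable_tuple hm) (MeasurableSet.univ_pi hs)]
  have hpre : (fun ω j => X j ω) ⁻¹' (univ.pi s) = ⋂ j ∈ Finset.univ, X j ⁻¹' s j := by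
    ext ω; simp [Set.mem_pi]
  rw [hpre, hindep.measure_inter_preimage_eq_mul Finset.univ (fun i _ => hs i)]
  exact Finset.prod_congr rfl fun j _ => by
    rw [← hd j, Measure.map_apply_of_aemeasurable (hm j) (hs j)]

lemma rad_prob : IsProbabilityMeasure
    ((2⁻¹ : ENNReal) • (Measure.dirac (1 : ℝ) + Measure.dirac (-1 : ℝ))) := by
  constructor
  rw [Measure.smul_apply, Measure.coe_add, Pi.add_apply, measure_univ, measure_univ,
    smul_eq_mul, mul_add, mul_one, ENNReal.inv_two_add_inv_two]

theorem equicontinuity_projections {Ω : Type*} [MeasurableSpace Ω] (μ : Measure Ω)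
    [IsProbabilityMeasure μ] (n : ℕ) (q : ℝ) (hq₁ : 1 < q) (hq₂ : q < 2)
    (X ε : Fin n → Ω → ℝ)
    (hXindep : iIndepFun X μ)
    (hXdist : ∀ j, Measure.map (X j) μ =
      volume.withDensity (fun x => ENNReal.ofReal
        ((2 * (q - 1) * Real.Gamma (1 + 1 / q))⁻¹ * |x| ^ ((2 - q) / (q - 1)) *
          Real.exp (-(|x| ^ (q / (q - 1)))))))
    (hεindep : iIndepFun ε μ)
    (hεdist : ∀ j, Measure.map (ε j) μ =
      (2⁻¹ : ENNReal) • (Measure.dirac (1 : ℝ) + Measure.dirac (-1 : ℝ)))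
    (a : Fin n → ℝ) (ha : ∑ j, a j ^ 2 = 1) :
    |(∫ ω, |∑ j, a j * X j ω| ∂μ) - ∫ ω, |∑ j, a j * ε j ω| ∂μ| ≤ 3 * (1 - 1 / q) := by
  haveI hνp : IsProbabilityMeasure (nuq q) := nuq_prob hq₁ hq₂
  haveI hρp := rad_prob
  have hXd : ∀ j, μ.map (X j) = nuq q := fun j => hXdist j
  -- a.e.-measurability
  have hXae : ∀ j, AEMeasurable (X j) μ := by
    intro j
    by_contra h
    have h0 := Measure.map_of_not_aemeasurable h
    rw [hXd j] at h0
    have := congrArg (fun m : Measure ℝ => m univ) h0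
    simp only [measure_univ, Measure.coe_zero, Pi.zero_apply] at this
    exact one_ne_zero this
  have hεae : ∀ j, AEMeasurable (ε j) μ := by
    intro j
    by_contra h
    have h0 := Measure.map_of_not_aemeasurable h
    rw [hεdist j] at h0
    have := congrArg (fun m : Measure ℝ => m univ) h0
    simp only [measure_univ, Measure.coe_zero, Pi.zero_apply] at this
    exact one_ne_zero this
  -- the coupled Rademacher variables
  set Y : Fin n → Ω → ℝ := fun j ω => sgn' (X j ω) with hY
  have hYae : ∀ j, AEMeasurable (Y j) μ := fun j => measurable_sgn'.comp_aemeasurable (hXae j)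
  have hYdist : ∀ j, μ.map (Y j) =
      (2⁻¹ : ENNReal) • (Measure.dirac (1 : ℝ) + Measure.dirac (-1 : ℝ)) := by
    intro j
    have hYc : Y j = sgn' ∘ X j := rfl
    rw [hYc, ← AEMeasurable.map_map_of_aemeasurable measurable_sgn'.aemeasurable (hXae j),
      hXd j, map_sgn'_nuq hq₁ hq₂]
  have hYindep : iIndepFun Y μ :=
    hXindep.comp (fun _ => sgn') (fun _ => measurable_sgn')
  -- equality of the Rademacher averages
  have hcont : Continuous (fun y : Fin n → ℝ => |∑ j, a j * y j|) := by
    apply continuous_abs.comp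
    exact continuous_finset_sum _ fun j _ => continuous_const.mul (continuous_apply j)
  have hmapε := joint_law μ ε hεae hεindep
      (fun _ => (2⁻¹ : ENNReal) • (Measure.dirac (1 : ℝ) + Measure.dirac (-1 : ℝ))) hεdist
  have hmapY := joint_law μ Y hYae hYindep
      (fun _ => (2⁻¹ : ENNReal) • (Measure.dirac (1 : ℝ) + Measure.dirac (-1 : ℝ))) hYdist
  have hεY : ∫ ω, |∑ j, a j * ε j ω| ∂μ = ∫ ω, |∑ j, a j * Y j ω| ∂μ := by
    have h1 : ∫ ω, |∑ j, a j * ε j ω| ∂μ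
        = ∫ y, (fun y : Fin n → ℝ => |∑ j, a j * y j|) y ∂(μ.map (fun ω j => ε j ω)) := by
      rw [integral_map (aemeasurable_tuple hεae) hcont.aestronglyMeasurable]
    have h2 : ∫ ω, |∑ j, a j * Y j ω| ∂μ
        = ∫ y, (fun y : Fin n → ℝ => |∑ j, a j * y j|) y ∂(μ.map (fun ω j => Y j ω)) := by
      rw [integral_map (aemeasurable_tuple hYae) hcont.aestronglyMeasurable]
    rw [h1, h2, hmapε, hmapY]
  rw [hεY]
  -- now the coupling bound
  set B : ℝ := 3 * (1 - 1 / q) with hB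
  have hq0 : 0 < q := by linarith
  have hBpos : 0 < B := by
    rw [hB]
    have : 1 / q < 1 := by rw [div_lt_one hq0]; linarith
    linarith
  -- L² facts
  have hidL2 : MemLp (id : ℝ → ℝ) 2 (nuq q) := by
    rw [memLp_two_iff_integrable_sq aestronglyMeasurable_id]
    exact (integrable_sq_nuq hq₁ hq₂).congr (by filter_upwards with x; simp)
  have hXL2 : ∀ j, MemLp (X j) 2 μ := by
    intro j
    have := (memLp_map_measure_iff aestronglyMeasurable_id (hXae j)).mp
      (by rw [hXd j]; exact hidL2)
    exact this
  have hYL2 : ∀ j, MemLp (Y j) 2 μ := by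
    intro j
    refine MemLp.of_bound ((hYae j).aestronglyMeasurable) 1 ?_
    filter_upwards with ω
    rw [hY]
    simp only [Real.norm_eq_abs, sgn']
    split_ifs <;> norm_num
  -- the differences
  set φ : Fin n → ℝ → ℝ := fun j x => a j * (x - sgn' x) with hφ
  have hφm : ∀ j, Measurable (φ j) := fun j => (measurable_id.sub measurable_sgn').const_mul _
  set D : Fin n → Ω → ℝ := fun j ω => a j * (X j ω - Y j ω) with hD
  have hDeq : ∀ j, D j = φ j ∘ X j := fun j => rfl
  have hDL2 : ∀ j, MemLp (D j) 2 μ := fun j => ((hXL2 j).sub (hYL2 j)).const_mul (a j)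
  have hDint : ∀ j, Integrable (D j) μ := fun j => (hDL2 j).integrable one_le_two
  set K : ℝ := ∫ x, (x - sgn' x) ^ 2 ∂(nuq q) with hK
  have hK0 : 0 ≤ K := integral_nonneg fun x => sq_nonneg _
  have hKB : K ≤ B ^ 2 := by
    rw [hK, integral_D_sq_nuq hq₁ hq₂, hB]
    calc Real.Gamma (2 - 1/q) / Real.Gamma (1/q) - 2 / Real.Gamma (1/q) + 1
        ≤ 9 * (1 - 1/q)^2 := aux_gamma_key hq₁ hq₂
      _ = (3 * (1 - 1/q))^2 := by ring
  -- expectations of D j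
  have hED : ∀ j, ∫ ω, D j ω ∂μ = 0 := by
    intro j
    rw [hD]
    simp only
    rw [integral_const_mul]
    have hφ0 : Measurable (fun x : ℝ => x - sgn' x) := measurable_id.sub measurable_sgn'
    have : ∫ ω, (X j ω - Y j ω) ∂μ = ∫ x, (x - sgn' x) ∂(nuq q) := by
      rw [← hXd j, integral_map (hXae j) hφ0.aestronglyMeasurable]
    rw [this, integral_D_nuq hq₁ hq₂, mul_zero]
  have hED2 : ∀ j, ∫ ω, (D j ω) ^ 2 ∂μ = a j ^ 2 * K := by
    intro j
    rw [hD]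
    simp only [mul_pow]
    rw [integral_const_mul]
    have hφ0 : Measurable (fun x : ℝ => (x - sgn' x) ^ 2) :=
      (measurable_id.sub measurable_sgn').pow_const 2
    have : ∫ ω, (X j ω - Y j ω) ^ 2 ∂μ = ∫ x, (x - sgn' x) ^ 2 ∂(nuq q) := by
      rw [← hXd j, integral_map (hXae j) hφ0.aestronglyMeasurable]
    rw [this, hK]
  -- variance of the sum
  have hpair : Set.Pairwise ↑(Finset.univ : Finset (Fin n))
      fun i j => IndepFun (D i) (D j) μ := by
    intro i _ j _ hij
    have := (hXindep.indepFun hij).comp (hφm i) (hφm j)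
    rwa [← hDeq i, ← hDeq j] at this
  have hvar : variance (∑ j, D j) μ = ∑ j, variance (D j) μ :=
    IndepFun.variance_sum (fun i _ => hDL2 i) hpair
  have hvarD : ∀ j, variance (D j) μ = a j ^ 2 * K := by
    intro j
    rw [variance_eq_sub (hDL2 j)]
    simp only [Pi.pow_apply]
    rw [hED2 j, hED j]
    ring
  have hEsum : ∫ ω, (∑ j, D j) ω ∂μ = 0 := by
    simp_rw [Finset.sum_apply]
    rw [integral_finset_sum _ fun i _ => hDint i]
    simp [hED]
  have hsumL2 : MemLp (∑ j, D j) 2 μ := memLp_finset_sum' _ fun i _ => hDL2 i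
  have hKint : ∫ ω, ((∑ j, D j) ω) ^ 2 ∂μ = K := by
    have h := variance_eq_sub hsumL2
    simp only [Pi.pow_apply] at h
    rw [hvar] at h
    have h2 : ∑ j, variance (D j) μ = K := by
      rw [Finset.sum_congr rfl fun j _ => hvarD j, ← Finset.sum_mul, ha, one_mul]
    rw [h2] at h
    -- h : K = ∫ (∑D)² - (∫ ∑D)²
    rw [hEsum] at h
    nlinarith [h]
  -- identify SX - SY with ∑ D
  have hdiff : (fun ω => (∑ j, a j * X j ω) - ∑ j, a j * Y j ω) = fun ω => (∑ j, D j) ω := by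
    funext ω
    rw [Finset.sum_apply, ← Finset.sum_sub_distrib]
    exact Finset.sum_congr rfl fun j _ => by rw [hD]; ring
  have hSXint : Integrable (fun ω => ∑ j, a j * X j ω) μ :=
    integrable_finset_sum _ fun j _ => ((hXL2 j).integrable one_le_two).const_mul (a j)
  have hSYint : Integrable (fun ω => ∑ j, a j * Y j ω) μ :=
    integrable_finset_sum _ fun j _ => ((hYL2 j).integrable one_le_two).const_mul (a j)
  have hDiffInt : Integrable (fun ω => (∑ j, D j) ω) μ := by
    rw [← hdiff]
    exact hSXint.sub hSYint
  have hDiffSqInt : Integrable (fun ω => ((∑ j, D j) ω) ^ 2) μ := by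
    have := hsumL2.integrable_sq
    apply this.congr
    filter_upwards with ω
    simp [Pi.pow_apply]
  -- the main estimate: E |∑ D| ≤ B
  have hmain : ∫ ω, |(∑ j, D j) ω| ∂μ ≤ B := by
    have hpoint : ∀ ω, |(∑ j, D j) ω| ≤ ((∑ j, D j) ω) ^ 2 / (2 * B) + B / 2 := by
      intro ω
      rw [div_add_div _ _ (by positivity) (by norm_num : (2:ℝ) ≠ 0), le_div_iff₀ (by positivity)]
      nlinarith [sq_nonneg (|(∑ j, D j) ω| - B), sq_abs ((∑ j, D j) ω), abs_nonneg ((∑ j, D j) ω)]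
    have h1 : ∫ ω, |(∑ j, D j) ω| ∂μ ≤ ∫ ω, (((∑ j, D j) ω) ^ 2 / (2 * B) + B / 2) ∂μ :=
      integral_mono hDiffInt.abs ((hDiffSqInt.div_const _).add (integrable_const _)) hpoint
    have h2 : ∫ ω, (((∑ j, D j) ω) ^ 2 / (2 * B) + B / 2) ∂μ = K / (2 * B) + B / 2 := by
      rw [integral_add (hDiffSqInt.div_const _) (integrable_const _), integral_div, hKint,
        integral_const, probReal_univ]
      simp
    rw [h2] at h1
    have h3 : K / (2 * B) + B / 2 ≤ B := by
      rw [div_add_div _ _ (by positivity) (by norm_num : (2:ℝ) ≠ 0), div_le_iff₀ (by positivity)]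
      nlinarith [hKB, hBpos]
    linarith
  -- triangle inequality
  have hi1 : Integrable (fun ω => |∑ j, a j * X j ω|) μ := hSXint.abs
  have hi2 : Integrable (fun ω => |∑ j, a j * Y j ω|) μ := hSYint.abs
  rw [abs_le]
  constructor
  · have hmono : ∫ ω, (|∑ j, a j * Y j ω| - |∑ j, a j * X j ω|) ∂μ
        ≤ ∫ ω, |(∑ j, D j) ω| ∂μ := by
      apply integral_mono (hi2.sub hi1) hDiffInt.abs
      intro ω
      have := abs_sub_abs_le_abs_sub (∑ j, a j * Y j ω) (∑ j, a j * X j ω)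
      rw [abs_sub_comm] at this
      calc |∑ j, a j * Y j ω| - |∑ j, a j * X j ω|
          ≤ |(∑ j, a j * X j ω) - ∑ j, a j * Y j ω| := this
        _ = |(∑ j, D j) ω| := congrArg abs (congrFun hdiff ω)
    rw [integral_sub hi2 hi1] at hmono
    linarith [hmain, hmono]
  · have hmono : ∫ ω, (|∑ j, a j * X j ω| - |∑ j, a j * Y j ω|) ∂μ
        ≤ ∫ ω, |(∑ j, D j) ω| ∂μ := by
      apply integral_mono (hi1.sub hi2) hDiffInt.abs
      intro ω
      have := abs_sub_abs_le_abs_sub (∑ j, a j * X j ω) (∑ j, a j * Y j ω)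
      calc |∑ j, a j * X j ω| - |∑ j, a j * Y j ω|
          ≤ |(∑ j, a j * X j ω) - ∑ j, a j * Y j ω| := this
        _ = |(∑ j, D j) ω| := congrArg abs (congrFun hdiff ω)
    rw [integral_sub hi1 hi2] at hmono
    linarith [hmain, hmono]
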